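/- Let (ζ,x,y) be isothermal boundary-compatible toroidal coordinates on the universal cover Q̃ of a toroidal domain, and let u_ζ be a vector field on the closed unit disc D tangent to ∂D. If r = x ∂_x + y ∂_y and N_ζ is the shift vector of (ζ,x,y), then r · (u_ζ + N_ζ) = 0 on ∂D, where · is the standard dot product on ℝ². -/

import Mathlib

noncomputable section

open Matrix

abbrev P2 := Fin 2 → ℝ
abbrev P3 := Fin 3 → ℝ

def Disc2 : Set P2 := {z | z 0 ^ 2 + z 1 ^ 2 ≤ 1}
def Cyl : Set P3 := {q | q 1 ^ 2 + q 2 ^ 2 ≤ 1}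

/-- Poloidal inclusion in coordinates: I_ζ(x,y) = (ζ,x,y). -/
def emb (ζ : ℝ) (z : P2) : P3 := Fin.cons ζ z

/-- Hypersurface metric h_ζ = I_ζ* g̃ in coordinates. -/
def hmet (g : P3 → Matrix (Fin 3) (Fin 3) ℝ) (ζ : ℝ) (z : P2) : Matrix (Fin 2) (Fin 2) ℝ :=
  Matrix.of fun i j => g (emb ζ z) i.succ j.succ

/-- Shift form 𝒩_ζ = I_ζ*(ι_{∂_ζ} g̃) in coordinates. -/
def shiftform (g : P3 → Matrix (Fin 3) (Fin 3) ℝ) (ζ : ℝ) (z : P2) (i : Fin 2) : ℝ :=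
  g (emb ζ z) 0 i.succ

/-- Shift vector N_ζ: the h_ζ-sharp of the shift form. -/
def shiftvec (g : P3 → Matrix (Fin 3) (Fin 3) ℝ) (ζ : ℝ) (z : P2) : P2 :=
  (hmet g ζ z)⁻¹.mulVec (shiftform g ζ z)

/-- Boundary-compatible toroidal coordinates: at every boundary point the unit normal n
(proportional to the g̃-gradient of x² + y²) has vanishing ζ-component dζ(n) = 0. -/
def BoundaryCompat (g : P3 → Matrix (Fin 3) (Fin 3) ℝ) : Prop :=
  ∀ q ∈ Cyl, q 1 ^ 2 + q 2 ^ 2 = 1 →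
    (g q)⁻¹ 0 1 * q 1 + (g q)⁻¹ 0 2 * q 2 = 0

/-- Isothermal toroidal coordinates: the hypersurface metric is conformal to dx² + dy², i.e.
h_ζ = f_ζ (dx² + dy²) for a nowhere-vanishing function f_ζ. -/
def Isothermal (g : P3 → Matrix (Fin 3) (Fin 3) ℝ) : Prop :=
  ∃ f : ℝ → P2 → ℝ, (∀ ζ z, f ζ z ≠ 0) ∧
    ∀ ζ z, hmet g ζ z = f ζ z • (1 : Matrix (Fin 2) (Fin 2) ℝ)


lemma posdef_inv_diag_pos (M : Matrix (Fin 3) (Fin 3) ℝ) (h : M.PosDef) : 0 < M⁻¹ 0 0 := by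
  have h2 := h.inv
  have := h2.dotProduct_mulVec_pos (x := Pi.single 0 1) (by simp [Function.ne_iff])
  simpa [dotProduct, mulVec, Fin.sum_univ_three] using this

/-- Lemma `bc_lemma`. Let (ζ,x,y) be isothermal boundary-compatible toroidal
coordinates on the universal cover Q̃ of a toroidal domain and let u_ζ be a vector field on D
tangent to ∂D. If r = x∂_x + y∂_y and N_ζ is the shift vector, then r · (u_ζ + N_ζ) = 0 on ∂D,
where · is the standard dot product on ℝ². -/
theorem tangency_of_shifted_velocity
    (g : P3 → Matrix (Fin 3) (Fin 3) ℝ)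
    (hg : ∀ q : P3, (g q).PosDef) (hgsym : ∀ q : P3, (g q).IsSymm)
    (hbc : BoundaryCompat g) (hiso : Isothermal g)
    (u : ℝ → P2 → P2)
    (hu : ∀ ζ : ℝ, ∀ z : P2, z 0 ^ 2 + z 1 ^ 2 = 1 →
      z 0 * u ζ z 0 + z 1 * u ζ z 1 = 0) :
    ∀ ζ : ℝ, ∀ z : P2, z 0 ^ 2 + z 1 ^ 2 = 1 →
      z 0 * (u ζ z 0 + shiftvec g ζ z 0) + z 1 * (u ζ z 1 + shiftvec g ζ z 1) = 0 := by
  obtain ⟨f, hf, hfm⟩ := hiso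
  intro ζ z hz
  set q : P3 := emb ζ z with hq
  have hq1 : q 1 = z 0 := rfl
  have hq2 : q 2 = z 1 := rfl
  set c := f ζ z with hc
  have hcne : c ≠ 0 := hf ζ z
  have hmetval : ∀ i j : Fin 2, g q i.succ j.succ = c * (1 : Matrix (Fin 2) (Fin 2) ℝ) i j := by
    intro i j
    have := congrArg (fun M : Matrix (Fin 2) (Fin 2) ℝ => M i j) (hfm ζ z)
    simpa [hmet, smul_eq_mul] using this
  have h11 : g q 1 1 = c := by simpa [Matrix.one_apply] using hmetval 0 0
  have h22 : g q 2 2 = c := by simpa [Matrix.one_apply] using hmetval 1 1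
  have h12 : g q 1 2 = 0 := by simpa [Matrix.one_apply] using hmetval 0 1
  have h21 : g q 2 1 = 0 := by simpa [Matrix.one_apply] using hmetval 1 0
  set A := (g q)⁻¹ with hA
  have hdet : IsUnit (g q).det := isUnit_iff_ne_zero.mpr (hg q).det_pos.ne'
  have hinv : A * g q = 1 := Matrix.nonsing_inv_mul _ hdet
  have e1 : A 0 0 * g q 0 1 + A 0 1 * c = 0 := by
    have := congrArg (fun M : Matrix (Fin 3) (Fin 3) ℝ => M 0 1) hinv
    simp [Matrix.mul_apply, Fin.sum_univ_three, Matrix.one_apply, h11, h21] at this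
    linarith
  have e2 : A 0 0 * g q 0 2 + A 0 2 * c = 0 := by
    have := congrArg (fun M : Matrix (Fin 3) (Fin 3) ℝ => M 0 2) hinv
    simp [Matrix.mul_apply, Fin.sum_univ_three, Matrix.one_apply, h22, h12] at this
    linarith
  have hA00 : 0 < A 0 0 := posdef_inv_diag_pos _ (hg q)
  have hbcq : A 0 1 * z 0 + A 0 2 * z 1 = 0 := by
    have := hbc q (by simp [Cyl, hq1, hq2, hz]) (by rw [hq1, hq2]; exact hz)
    simpa [hA, hq1, hq2] using this
  have key : g q 0 1 * z 0 + g q 0 2 * z 1 = 0 := by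
    have hmul : A 0 0 * (g q 0 1 * z 0 + g q 0 2 * z 1) = 0 := by
      have : (A 0 1 * z 0 + A 0 2 * z 1) * c = 0 := by rw [hbcq]; ring
      linear_combination z 0 * e1 + z 1 * e2 - this
    exact (mul_eq_zero.mp hmul).resolve_left hA00.ne'
  -- compute the shift vector
  have hhm : hmet g ζ z = c • (1 : Matrix (Fin 2) (Fin 2) ℝ) := hfm ζ z
  have hhinv : (hmet g ζ z)⁻¹ = c⁻¹ • (1 : Matrix (Fin 2) (Fin 2) ℝ) := by
    apply Matrix.inv_eq_right_inv
    rw [hhm, smul_mul_smul_comm, one_mul, mul_inv_cancel₀ hcne, one_smul]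
  have hsv : ∀ i : Fin 2, shiftvec g ζ z i = c⁻¹ * g q 0 i.succ := by
    intro i
    simp [shiftvec, hhinv, shiftform, mulVec, dotProduct, Fin.sum_univ_two,
      Matrix.smul_apply, Matrix.one_apply, hq]
  have hu' := hu ζ z hz
  have hsv0 : shiftvec g ζ z 0 = c⁻¹ * g q 0 1 := hsv 0
  have hsv1 : shiftvec g ζ z 1 = c⁻¹ * g q 0 2 := hsv 1
  rw [hsv0, hsv1]
  field_simp
  linear_combination c * hu' + key


end
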